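/- Fix μ > 0 and z_o ∈ ℝ, z ∈ ℝⁿ. Consider the system: t - ∑ᵢ 2μ²t/(t² - xᵢ²) = z_o, xᵢ + 2μ²xᵢ/(t² - xᵢ²) = zᵢ for each i, and t > |xᵢ| for all i. For any solution (t,x), each xᵢ has the same sign as zᵢ and |xᵢ| ≤ min(t, |zᵢ|). -/

import Mathlib

theorem stmt_11 {n : ℕ} (μ zo : ℝ) (z : Fin n → ℝ) (hμ : 0 < μ)
    (t : ℝ) (x : Fin n → ℝ)
    (ht : t - ∑ i, 2 * μ ^ 2 * t / (t ^ 2 - x i ^ 2) = zo)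
    (hx : ∀ i, x i + 2 * μ ^ 2 * x i / (t ^ 2 - x i ^ 2) = z i)
    (hlt : ∀ i, |x i| < t) :
    ∀ i, Real.sign (x i) = Real.sign (z i) ∧ |x i| ≤ min t |z i| := by
  intro i
  have hti := hlt i
  have hd : 0 < t ^ 2 - x i ^ 2 := by
    have : x i ^ 2 < t ^ 2 := by
      have := sq_lt_sq' (neg_lt_of_abs_lt hti) (lt_of_abs_lt hti)
      simpa using this
    linarith
  set d := t ^ 2 - x i ^ 2 with hdd
  have hc : 1 < 1 + 2 * μ ^ 2 / d := by
    have : 0 < 2 * μ ^ 2 / d := by positivity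
    linarith
  have hz : z i = x i * (1 + 2 * μ ^ 2 / d) := by
    rw [← hx i, ← hdd]; ring
  have hc0 : 0 < 1 + 2 * μ ^ 2 / d := by linarith
  constructor
  · rcases lt_trichotomy (x i) 0 with h | h | h
    · rw [Real.sign_of_neg h, Real.sign_of_neg (by rw [hz]; exact mul_neg_of_neg_of_pos h hc0)]
    · rw [h, hz, h]; simp
    · rw [Real.sign_of_pos h, Real.sign_of_pos (by rw [hz]; exact mul_pos h hc0)]
  · refine le_min (le_of_lt hti) ?_
    rw [hz, abs_mul, abs_of_pos hc0]
    nlinarith [abs_nonneg (x i)]
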